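/- Every extreme point of the convex set $\mathcal{D} \cap \widetilde{\mathcal{B}}_1^t(\bar{x})$ lies in the set $\{z \in \prod_{i=1}^k \{a_i, \bar{x}_i, b_i\} \mid |\{i \in [k] \mid z_i \neq \bar{x}_i\}| \leq t\}$; in particular, every extreme point lies in the $\ell_0$-ball $\mathcal{B}_0^t(\bar{x})$. -/
import Mathlib
open scoped ENNReal

noncomputable def deltaE {k : ℕ} (a b x : Fin k → ℝ) (i : Fin k) (y : Fin k → ℝ) : ℝ≥0∞ :=
  if y i = x i then 0
  else if x i < y i then (if b i = x i then ⊤ else ENNReal.ofReal ((y i - x i) / (b i - x i)))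
  else (if a i = x i then ⊤ else ENNReal.ofReal ((y i - x i) / (a i - x i)))

noncomputable def d1 {k : ℕ} (a b x : Fin k → ℝ) (i : Fin k) (v : ℝ) : ℝ :=
  if v = x i then 0 else if x i < v then (v - x i) / (b i - x i) else (v - x i) / (a i - x i)

variable {k : ℕ} {a b x : Fin k → ℝ}

lemma d1_nonneg (i : Fin k) {v : ℝ} (ha : a i ≤ v) (hb : v ≤ b i) : 0 ≤ d1 a b x i v := by
  unfold d1
  split_ifs with h1 h2
  · exact le_rfl
  · exact div_nonneg (by linarith) (by linarith)
  · have hvx : v < x i := lt_of_le_of_ne (not_lt.mp h2) h1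
    exact le_of_lt (div_pos_of_neg_of_neg (by linarith) (by linarith))

lemma d1_le_one (i : Fin k) {v : ℝ} (ha : a i ≤ v) (hb : v ≤ b i)
    (hax : a i ≤ x i) (hxb : x i ≤ b i) : d1 a b x i v ≤ 1 := by
  unfold d1
  split_ifs with h1 h2
  · norm_num
  · rw [div_le_one (by linarith)]; linarith
  · have hvx : v < x i := lt_of_le_of_ne (not_lt.mp h2) h1
    rw [← neg_div_neg_eq, div_le_one (by linarith)]; linarith

lemma deltaE_eq (i : Fin k) (y : Fin k → ℝ) (ha : a i ≤ y i) (hb : y i ≤ b i) :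
    deltaE a b x i y = ENNReal.ofReal (d1 a b x i (y i)) := by
  unfold deltaE d1
  split_ifs with h1 h2 h3 h4
  · simp
  · exact absurd h3 (by intro h; rw [h] at hb; linarith)
  · rfl
  · have hvx : y i < x i := lt_of_le_of_ne (not_lt.mp h2) h1
    exact absurd h4 (by intro h; rw [h] at ha; linarith)
  · rfl

lemma sum_deltaE_eq (y : Fin k → ℝ) (hy : ∀ i, y i ∈ Set.Icc (a i) (b i)) :
    ∑ i, deltaE a b x i y = ENNReal.ofReal (∑ i, d1 a b x i (y i)) := by
  rw [ENNReal.ofReal_sum_of_nonneg (fun i _ => d1_nonneg i (hy i).1 (hy i).2)]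
  exact Finset.sum_congr rfl fun i _ => deltaE_eq i y (hy i).1 (hy i).2

lemma mem_S_iff (t : ℕ) (y : Fin k → ℝ) :
    y ∈ ({y : Fin k → ℝ | ∀ i, y i ∈ Set.Icc (a i) (b i)} ∩
        {y : Fin k → ℝ | ∑ i, deltaE a b x i y ≤ (t : ℝ≥0∞)}) ↔
      (∀ i, y i ∈ Set.Icc (a i) (b i)) ∧ ∑ i, d1 a b x i (y i) ≤ (t : ℝ) := by
  constructor
  · rintro ⟨h1, h2⟩
    refine ⟨h1, ?_⟩
    rw [Set.mem_setOf_eq, sum_deltaE_eq y h1, ← ENNReal.ofReal_natCast t] at h2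
    exact le_trans (ENNReal.le_ofReal_iff_toReal_le (ENNReal.ofReal_ne_top) (Nat.cast_nonneg t) |>.mp h2 |> fun h => by
      rwa [ENNReal.toReal_ofReal (Finset.sum_nonneg fun i _ => d1_nonneg i (h1 i).1 (h1 i).2)] at h) le_rfl
  · rintro ⟨h1, h2⟩
    refine ⟨h1, ?_⟩
    rw [Set.mem_setOf_eq, sum_deltaE_eq y h1, ← ENNReal.ofReal_natCast t]
    exact ENNReal.ofReal_le_ofReal h2

lemma sum_d1_update (z : Fin k → ℝ) (j : Fin k) (w : ℝ) :
    ∑ i, d1 a b x i (Function.update z j w i)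
      = ∑ i, d1 a b x i (z i) - d1 a b x j (z j) + d1 a b x j w := by
  have key : (fun i => d1 a b x i (Function.update z j w i))
      = Function.update (fun i => d1 a b x i (z i)) j (d1 a b x j w) := by
    funext i
    by_cases h : i = j
    · subst h; simp
    · simp [Function.update_of_ne h]
  rw [key, Finset.sum_update_of_mem (Finset.mem_univ j),
    ← Finset.add_sum_erase Finset.univ (fun i => d1 a b x i (z i)) (Finset.mem_univ j)]
  simp [Finset.sdiff_singleton_eq_erase]
  ring

/-- Moving coordinate value by `η * c` shifts `d1` by exactly `η` and stays in the box. -/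
lemma perturb (hx : ∀ i, a i ≤ x i ∧ x i ≤ b i)
    (j : Fin k) {v : ℝ} (ha : a j ≤ v) (hb : v ≤ b j) (hne : v ≠ x j) {η : ℝ}
    (h1 : 0 < d1 a b x j v + η) (h2 : d1 a b x j v + η < 1) :
    a j ≤ v + η * (if x j < v then b j - x j else a j - x j) ∧
    v + η * (if x j < v then b j - x j else a j - x j) ≤ b j ∧
    d1 a b x j (v + η * (if x j < v then b j - x j else a j - x j)) = d1 a b x j v + η := by
  set w : ℝ := v + η * (if x j < v then b j - x j else a j - x j) with hw
  by_cases hc : x j < v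
  · have hbx : x j < b j := lt_of_lt_of_le hc hb
    have hd : d1 a b x j v = (v - x j) / (b j - x j) := by
      unfold d1; rw [if_neg hne, if_pos hc]
    have hwx : w - x j = (d1 a b x j v + η) * (b j - x j) := by
      rw [hw, if_pos hc, hd, add_mul, div_mul_cancel₀ _ (sub_ne_zero.mpr (ne_of_gt hbx))]; ring
    have hwgt : x j < w := by nlinarith
    have hwlt : w < b j := by nlinarith
    refine ⟨le_trans (hx j).1 (le_of_lt hwgt), le_of_lt hwlt, ?_⟩
    unfold d1
    rw [if_neg (ne_of_gt hwgt), if_pos hwgt, hwx, mul_div_assoc, div_self (by linarith), mul_one, hd,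
      if_neg hne, if_pos hc]
  · have hvx : v < x j := lt_of_le_of_ne (not_lt.mp hc) hne
    have hax : a j < x j := lt_of_le_of_lt ha hvx
    have hd : d1 a b x j v = (v - x j) / (a j - x j) := by
      unfold d1; rw [if_neg hne, if_neg hc]
    have hwx : w - x j = (d1 a b x j v + η) * (a j - x j) := by
      rw [hw, if_neg hc, hd, add_mul, div_mul_cancel₀ _ (sub_ne_zero.mpr (ne_of_lt hax))]; ring
    have hwlt : w < x j := by nlinarith
    have hwgt : a j < w := by nlinarith
    refine ⟨le_of_lt hwgt, le_trans (le_of_lt hwlt) (hx j).2, ?_⟩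
    unfold d1
    rw [if_neg (ne_of_lt hwlt), if_neg (not_lt.mpr (le_of_lt hwlt)), hwx, mul_div_assoc,
      div_self (by linarith), mul_one, hd, if_neg hne, if_neg hc]

lemma d1_frac (j : Fin k) {v : ℝ} (ha : a j ≤ v) (hb : v ≤ b j)
    (hna : v ≠ a j) (hnx : v ≠ x j) (hnb : v ≠ b j) :
    0 < d1 a b x j v ∧ d1 a b x j v < 1 := by
  unfold d1
  rw [if_neg hnx]
  by_cases hc : x j < v
  · have hvb : v < b j := lt_of_le_of_ne hb hnb
    rw [if_pos hc]
    constructor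
    · exact div_pos (by linarith) (by linarith)
    · rw [div_lt_one (by linarith)]; linarith
  · have hvx : v < x j := lt_of_le_of_ne (not_lt.mp hc) hnx
    have hav : a j < v := lt_of_le_of_ne ha (Ne.symm hna)
    rw [if_neg hc]
    constructor
    · exact div_pos_of_neg_of_neg (by linarith) (by linarith)
    · rw [← neg_div_neg_eq, div_lt_one (by linarith)]; linarith

lemma d1_pos_ne (j : Fin k) {v : ℝ} (h : 0 < d1 a b x j v) : v ≠ x j := by
  intro hv; unfold d1 at h; rw [if_pos hv] at h; exact lt_irrefl 0 h

/-- Every extreme point of `D ∩ B̃₁ᵗ(x)` has all coordinates in `{aᵢ, xᵢ, bᵢ}`,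
differs from `x` in at most `t` coordinates, and in particular lies in the ℓ₀-ball. -/
theorem extremePoints_subset_l0Ball {k : ℕ} (hk : 1 ≤ k) (t : ℕ) (ht : 1 ≤ t) (htk : t ≤ k)
    (a b x : Fin k → ℝ) (hab : ∀ i, a i ≤ b i) (hx : ∀ i, a i ≤ x i ∧ x i ≤ b i)
    (z : Fin k → ℝ)
    (hz : z ∈ Set.extremePoints ℝ
      ({y : Fin k → ℝ | ∀ i, y i ∈ Set.Icc (a i) (b i)} ∩
        {y : Fin k → ℝ | ∑ i, deltaE a b x i y ≤ (t : ℝ≥0∞)})) :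
    ((∀ i, z i = a i ∨ z i = x i ∨ z i = b i) ∧
        (Finset.univ.filter (fun i => z i ≠ x i)).card ≤ t) ∧
      z ∈ {y : Fin k → ℝ | (∀ i, y i ∈ Set.Icc (a i) (b i)) ∧
        (Finset.univ.filter (fun i => y i ≠ x i)).card ≤ t} := by
  rw [mem_extremePoints] at hz
  obtain ⟨hzS, hext⟩ := hz
  obtain ⟨hzD, hzsum⟩ := (mem_S_iff t z).mp hzS
  -- contradiction helper for extremality
  have contra : ∀ y1 y2 : Fin k → ℝ,
      (∀ i, y1 i ∈ Set.Icc (a i) (b i)) → (∑ i, d1 a b x i (y1 i)) ≤ (t : ℝ) →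
      (∀ i, y2 i ∈ Set.Icc (a i) (b i)) → (∑ i, d1 a b x i (y2 i)) ≤ (t : ℝ) →
      (∀ i, y1 i + y2 i = 2 * z i) → y1 ≠ z → False := by
    intro y1 y2 hD1 hs1 hD2 hs2 hmid hne
    have hmem1 := (mem_S_iff t y1).mpr ⟨hD1, hs1⟩
    have hmem2 := (mem_S_iff t y2).mpr ⟨hD2, hs2⟩
    have hseg : z ∈ openSegment ℝ y1 y2 := by
      refine ⟨1/2, 1/2, by norm_num, by norm_num, by norm_num, ?_⟩
      funext i
      simp only [Pi.add_apply, Pi.smul_apply, smul_eq_mul]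
      linarith [hmid i]
    exact hne (hext y1 hmem1 y2 hmem2 hseg).1
  -- Step 1: all coordinates of z are in {a i, x i, b i}
  have key : ∀ i, z i = a i ∨ z i = x i ∨ z i = b i := by
    by_contra hcon
    push_neg at hcon
    obtain ⟨j, hja, hjx, hjb⟩ := hcon
    obtain ⟨hdj0, hdj1⟩ := d1_frac j (hzD j).1 (hzD j).2 hja hjx hjb
    rcases lt_or_eq_of_le hzsum with hlt | heq
    · -- slack case : perturb only coordinate j
      set m : ℝ := min ((t : ℝ) - ∑ i, d1 a b x i (z i)) (min (d1 a b x j (z j)) (1 - d1 a b x j (z j))) with hm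
      have hm1 : m ≤ (t : ℝ) - ∑ i, d1 a b x i (z i) := min_le_left _ _
      have hm2 : m ≤ d1 a b x j (z j) := le_trans (min_le_right _ _) (min_le_left _ _)
      have hm3 : m ≤ 1 - d1 a b x j (z j) := le_trans (min_le_right _ _) (min_le_right _ _)
      have hmpos : 0 < m := lt_min (by linarith) (lt_min hdj0 (by linarith))
      set η : ℝ := m / 2 with hη
      have hηpos : 0 < η := by positivity
      have hη2 : 2 * η = m := by rw [hη]; ring
      obtain ⟨hwa, hwb, hwd⟩ := perturb hx j (hzD j).1 (hzD j).2 hjx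
        (η := η) (by linarith) (by linarith)
      obtain ⟨hwa', hwb', hwd'⟩ := perturb hx j (hzD j).1 (hzD j).2 hjx
        (η := -η) (by linarith) (by linarith)
      set c : ℝ := if x j < z j then b j - x j else a j - x j with hc
      have hcne : c ≠ 0 := by
        rw [hc]; split_ifs with h
        · have := lt_of_lt_of_le h (hzD j).2; intro h'; linarith [sub_eq_zero.mp h']
        · have hvx : z j < x j := lt_of_le_of_ne (not_lt.mp h) hjx
          have := lt_of_le_of_lt (hzD j).1 hvx; intro h'; linarith [sub_eq_zero.mp h']
      refine contra (Function.update z j (z j + η * c)) (Function.update z j (z j + (-η) * c))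
        ?_ ?_ ?_ ?_ ?_ ?_
      · intro i; by_cases h : i = j
        · subst h; rw [Function.update_self]; exact ⟨hwa, hwb⟩
        · rw [Function.update_of_ne h]; exact hzD i
      · rw [sum_d1_update, hwd]; linarith
      · intro i; by_cases h : i = j
        · subst h; rw [Function.update_self]; exact ⟨hwa', hwb'⟩
        · rw [Function.update_of_ne h]; exact hzD i
      · rw [sum_d1_update, hwd']; linarith
      · intro i; by_cases h : i = j
        · subst h; rw [Function.update_self, Function.update_self]; ring
        · rw [Function.update_of_ne h, Function.update_of_ne h]; ring
      · intro h
        have := congrFun h j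
        rw [Function.update_self] at this
        have : η * c = 0 := by linarith
        rcases mul_eq_zero.mp this with h' | h'
        · exact absurd h' (ne_of_gt hηpos)
        · exact hcne h'
    · -- tight case : find a second fractional coordinate
      have hsecond : ∃ j', j' ≠ j ∧ 0 < d1 a b x j' (z j') ∧ d1 a b x j' (z j') < 1 := by
        by_contra hno
        push_neg at hno
        have hvals : ∀ i ∈ Finset.univ.erase j,
            d1 a b x i (z i) = if d1 a b x i (z i) = 1 then (1 : ℝ) else 0 := by
          intro i hi
          have hine : i ≠ j := Finset.ne_of_mem_erase hi
          have h0 : 0 ≤ d1 a b x i (z i) := d1_nonneg i (hzD i).1 (hzD i).2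
          have h1 : d1 a b x i (z i) ≤ 1 := d1_le_one i (hzD i).1 (hzD i).2 (hx i).1 (hx i).2
          rcases lt_or_eq_of_le h0 with hp | hp
          · have := hno i hine hp
            have : d1 a b x i (z i) = 1 := le_antisymm h1 this
            rw [if_pos this, this]
          · rw [if_neg (by rw [← hp]; norm_num), ← hp]
        have hsplit : ∑ i, d1 a b x i (z i)
            = d1 a b x j (z j) + ∑ i ∈ Finset.univ.erase j, d1 a b x i (z i) :=
          (Finset.add_sum_erase Finset.univ _ (Finset.mem_univ j)).symm
        have hcard : ∑ i ∈ Finset.univ.erase j, d1 a b x i (z i)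
            = (((Finset.univ.erase j).filter (fun i => d1 a b x i (z i) = 1)).card : ℝ) := by
          rw [Finset.sum_congr rfl hvals, Finset.sum_boole]
        set m := ((Finset.univ.erase j).filter (fun i => d1 a b x i (z i) = 1)).card with hmdef
        have h1 : (m : ℝ) < t := by rw [← heq, hsplit, hcard]; linarith
        have h2 : (t : ℝ) < m + 1 := by rw [← heq, hsplit, hcard]; linarith
        have h1' : m < t := by exact_mod_cast h1
        have h2' : t < m + 1 := by exact_mod_cast h2
        omega
      obtain ⟨j', hjj', hdj'0, hdj'1⟩ := hsecond
      have hjx' : z j' ≠ x j' := d1_pos_ne j' hdj'0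
      set m : ℝ := min (min (d1 a b x j (z j)) (1 - d1 a b x j (z j)))
          (min (d1 a b x j' (z j')) (1 - d1 a b x j' (z j'))) with hm
      have hm1 : m ≤ d1 a b x j (z j) := le_trans (min_le_left _ _) (min_le_left _ _)
      have hm2 : m ≤ 1 - d1 a b x j (z j) := le_trans (min_le_left _ _) (min_le_right _ _)
      have hm3 : m ≤ d1 a b x j' (z j') := le_trans (min_le_right _ _) (min_le_left _ _)
      have hm4 : m ≤ 1 - d1 a b x j' (z j') := le_trans (min_le_right _ _) (min_le_right _ _)
      have hmpos : 0 < m := lt_min (lt_min hdj0 (by linarith)) (lt_min hdj'0 (by linarith))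
      set η : ℝ := m / 2 with hη
      have hηpos : 0 < η := by positivity
      have hη2 : 2 * η = m := by rw [hη]; ring
      obtain ⟨hwa, hwb, hwd⟩ := perturb hx j (hzD j).1 (hzD j).2 hjx
        (η := η) (by linarith) (by linarith)
      obtain ⟨hwa2, hwb2, hwd2⟩ := perturb hx j (hzD j).1 (hzD j).2 hjx
        (η := -η) (by linarith) (by linarith)
      obtain ⟨hwa', hwb', hwd'⟩ := perturb hx j' (hzD j').1 (hzD j').2 hjx'
        (η := -η) (by linarith) (by linarith)
      obtain ⟨hwa2', hwb2', hwd2'⟩ := perturb hx j' (hzD j').1 (hzD j').2 hjx'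
        (η := η) (by linarith) (by linarith)
      set c : ℝ := if x j < z j then b j - x j else a j - x j with hc
      set c' : ℝ := if x j' < z j' then b j' - x j' else a j' - x j' with hc'
      have hcne : c ≠ 0 := by
        rw [hc]; split_ifs with h
        · have := lt_of_lt_of_le h (hzD j).2; intro h'; linarith [sub_eq_zero.mp h']
        · have hvx : z j < x j := lt_of_le_of_ne (not_lt.mp h) hjx
          have := lt_of_le_of_lt (hzD j).1 hvx; intro h'; linarith [sub_eq_zero.mp h']
      refine contra
        (Function.update (Function.update z j (z j + η * c)) j' (z j' + (-η) * c'))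
        (Function.update (Function.update z j (z j + (-η) * c)) j' (z j' + η * c'))
        ?_ ?_ ?_ ?_ ?_ ?_
      · intro i
        by_cases h' : i = j'
        · subst h'; rw [Function.update_self]; exact ⟨hwa', hwb'⟩
        · rw [Function.update_of_ne h']
          by_cases h : i = j
          · subst h; rw [Function.update_self]; exact ⟨hwa, hwb⟩
          · rw [Function.update_of_ne h]; exact hzD i
      · rw [sum_d1_update, Function.update_of_ne hjj', sum_d1_update, hwd, hwd', heq]; linarith
      · intro i
        by_cases h' : i = j'
        · subst h'; rw [Function.update_self]; exact ⟨hwa2', hwb2'⟩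
        · rw [Function.update_of_ne h']
          by_cases h : i = j
          · subst h; rw [Function.update_self]; exact ⟨hwa2, hwb2⟩
          · rw [Function.update_of_ne h]; exact hzD i
      · rw [sum_d1_update, Function.update_of_ne hjj', sum_d1_update, hwd2, hwd2', heq]; linarith
      · intro i
        by_cases h' : i = j'
        · subst h'; rw [Function.update_self, Function.update_self]; ring
        · rw [Function.update_of_ne h', Function.update_of_ne h']
          by_cases h : i = j
          · subst h; rw [Function.update_self, Function.update_self]; ring
          · rw [Function.update_of_ne h, Function.update_of_ne h]; ring
      · intro h
        have hcf := congrFun h j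
        rw [Function.update_of_ne (Ne.symm hjj'), Function.update_self] at hcf
        have : η * c = 0 := by linarith
        rcases mul_eq_zero.mp this with h' | h'
        · exact absurd h' (ne_of_gt hηpos)
        · exact hcne h'
  -- Step 2: the cardinality bound
  have hone : ∀ i, d1 a b x i (z i) = if z i ≠ x i then (1 : ℝ) else 0 := by
    intro i
    rcases key i with h | h | h
    · by_cases hax : a i = x i
      · rw [if_neg (by rw [h, hax]; simp), h, hax]; unfold d1; simp
      · have hax' : a i < x i := lt_of_le_of_ne (hx i).1 hax
        rw [if_pos (by rw [h]; exact ne_of_lt hax')]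
        unfold d1
        rw [h, if_neg (ne_of_lt hax'), if_neg (not_lt.mpr (le_of_lt hax')),
          div_self (sub_ne_zero.mpr (ne_of_lt hax'))]
    · rw [if_neg (by simp [h]), h]; unfold d1; simp
    · by_cases hbx : b i = x i
      · rw [if_neg (by rw [h, hbx]; simp), h, hbx]; unfold d1; simp
      · have hbx' : x i < b i := lt_of_le_of_ne (hx i).2 (Ne.symm hbx)
        rw [if_pos (by rw [h]; exact Ne.symm (ne_of_lt hbx'))]
        unfold d1
        rw [h, if_neg (Ne.symm (ne_of_lt hbx')), if_pos hbx',
          div_self (sub_ne_zero.mpr (Ne.symm (ne_of_lt hbx')))]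
  have hcard : (Finset.univ.filter (fun i => z i ≠ x i)).card ≤ t := by
    have hs : ∑ i, d1 a b x i (z i)
        = ((Finset.univ.filter (fun i => z i ≠ x i)).card : ℝ) := by
      rw [Finset.sum_congr rfl (fun i _ => hone i), Finset.sum_boole]
    have : ((Finset.univ.filter (fun i => z i ≠ x i)).card : ℝ) ≤ (t : ℝ) := by
      rw [← hs]; exact hzsum
    exact_mod_cast this
  exact ⟨⟨key, hcard⟩, hzD, hcard⟩
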